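/- Let Ω be a compact body with smooth boundary in a Riemannian 3-manifold, and let E, B be smooth vector fields with corresponding charges Q_E = (1/4π)∫_{∂Ω} g(E,ν)dσ and Q_B = (1/4π)∫_{∂Ω} g(B,ν)dσ. Suppose μ, defined on ∂Ω, satisfies μ − |J_{EM}| ≥ 0 and μ_{EM} := μ − (1/8π)(|E|²+|B|²) ≥ |J_{EM}| on ∂Ω. Then Q² := Q_E² + Q_B² ≤ (|∂Ω|/2π) ∫_{∂Ω} (μ − |J_{EM}|) dσ. -/

import Mathlib

/- STATEMENT 12 (inequality (41) of the paper): with charges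
Q_E = (1/4π)∫_{∂Ω} g(E,ν)dσ and Q_B = (1/4π)∫_{∂Ω} g(B,ν)dσ, if on ∂Ω one has
μ − |J_EM| ≥ 0 and the charged dominant energy condition
μ − (1/8π)(|E|²+|B|²) ≥ |J_EM|, then
  Q² = Q_E² + Q_B² ≤ (|∂Ω|/2π) ∫_{∂Ω} (μ − |J_EM|) dσ.
The boundary ∂Ω is represented by a finite measure space (Y, σ); |J_EM| by the
absolute value of a function J_EM. -/

open MeasureTheory Real
open scoped RealInnerProductSpace

noncomputable section

abbrev E3 := EuclideanSpace ℝ (Fin 3)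

lemma sq_int_le {Y : Type*} [MeasureSpace Y] [IsFiniteMeasure (volume : Measure Y)]
    (f : Y → ℝ) (hf : Integrable f) (hf2 : Integrable fun y => f y ^ 2) :
    (∫ y, f y) ^ 2 ≤ (volume (Set.univ : Set Y)).toReal * ∫ y, f y ^ 2 := by
  set M := (volume (Set.univ : Set Y)).toReal with hMdef
  set I := ∫ y, f y with hI
  have hM0 : 0 ≤ M := ENNReal.toReal_nonneg
  rcases eq_or_lt_of_le hM0 with h | h
  · have hv : (volume : Measure Y) = 0 := by
      apply Measure.measure_univ_eq_zero.mp
      have := (measure_ne_top (volume : Measure Y) Set.univ)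
      exact (ENNReal.toReal_eq_zero_iff _).mp h.symm |>.resolve_right this
    have : I = 0 := by rw [hI, hv, integral_zero_measure]
    simp [this, ← h]
  · have key : 0 ≤ ∫ y, (M * f y - I) ^ 2 := integral_nonneg fun y => sq_nonneg _
    have h1 : ∀ y, (M * f y - I) ^ 2 = M ^ 2 * f y ^ 2 - (2 * M * I) * f y + I ^ 2 := by
      intro y; ring
    have hint1 : Integrable fun y => M ^ 2 * f y ^ 2 - (2 * M * I) * f y :=
      (hf2.const_mul _).sub (hf.const_mul _)
    have expand : ∫ y, (M * f y - I) ^ 2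
        = M ^ 2 * (∫ y, f y ^ 2) - (2 * M * I) * I + M * I ^ 2 := by
      simp_rw [h1]
      rw [integral_add hint1 (integrable_const _),
        integral_sub (hf2.const_mul _) (hf.const_mul _),
        integral_const_mul, integral_const_mul, integral_const, smul_eq_mul, ← hI, measureReal_def, ← hMdef]
    rw [expand] at key
    have hle : M * I ^ 2 ≤ M ^ 2 * ∫ y, f y ^ 2 := by nlinarith
    calc I ^ 2 = (M * I ^ 2) / M := by field_simp
    _ ≤ (M ^ 2 * ∫ y, f y ^ 2) / M := by gcongr
    _ = M * ∫ y, f y ^ 2 := by field_simp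



theorem charge_bound
    {Y : Type*} [MeasureSpace Y] [IsFiniteMeasure (volume : Measure Y)]
    (E B : Y → E3) (ν : Y → E3) (μ JEM : Y → ℝ)
    (hν : ∀ y, ‖ν y‖ = 1)
    -- μ − |J_EM| ≥ 0 on ∂Ω
    (hμ : ∀ y, 0 ≤ μ y - |JEM y|)
    -- charged dominant energy condition μ_EM = μ − (1/8π)(|E|²+|B|²) ≥ |J_EM| on ∂Ω
    (hCDE : ∀ y, |JEM y| ≤ μ y - (1 / (8 * π)) * (‖E y‖ ^ 2 + ‖B y‖ ^ 2))
    (hintE : Integrable fun y => ⟪E y, ν y⟫)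
    (hintB : Integrable fun y => ⟪B y, ν y⟫)
    (hintE2 : Integrable fun y => ‖E y‖ ^ 2)
    (hintB2 : Integrable fun y => ‖B y‖ ^ 2)
    (hintμ : Integrable fun y => μ y - |JEM y|) :
    ((1 / (4 * π)) * ∫ y, ⟪E y, ν y⟫) ^ 2 + ((1 / (4 * π)) * ∫ y, ⟪B y, ν y⟫) ^ 2 ≤
      ((volume (Set.univ : Set Y)).toReal / (2 * π)) * ∫ y, (μ y - |JEM y|) := by
  have hπ : (0:ℝ) < π := Real.pi_pos
  set M := (volume (Set.univ : Set Y)).toReal with hMdef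
  have hM0 : 0 ≤ M := ENNReal.toReal_nonneg
  -- integrability of squared inner products
  have hsq : ∀ (X : Y → E3), (Integrable fun y => ⟪X y, ν y⟫) →
      (Integrable fun y => ‖X y‖ ^ 2) → Integrable fun y => ⟪X y, ν y⟫ ^ 2 := by
    intro X hX hX2
    refine hX2.mono (by
      simpa [pow_two, Pi.mul_def] using hX.aestronglyMeasurable.mul hX.aestronglyMeasurable)
      (Filter.Eventually.of_forall fun y => ?_)
    have h1 : |⟪X y, ν y⟫| ≤ ‖X y‖ * ‖ν y‖ := abs_real_inner_le_norm _ _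
    rw [hν y, mul_one] at h1
    have : ⟪X y, ν y⟫ ^ 2 ≤ ‖X y‖ ^ 2 := by nlinarith [abs_nonneg ⟪X y, ν y⟫, sq_abs ⟪X y, ν y⟫]
    simpa [abs_of_nonneg (sq_nonneg ⟪X y, ν y⟫), abs_of_nonneg (sq_nonneg ‖X y‖)] using this
  have hptE : ∀ y, ⟪E y, ν y⟫ ^ 2 ≤ ‖E y‖ ^ 2 := by
    intro y
    have h1 : |⟪E y, ν y⟫| ≤ ‖E y‖ * ‖ν y‖ := abs_real_inner_le_norm _ _
    rw [hν y, mul_one] at h1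
    nlinarith [abs_nonneg ⟪E y, ν y⟫, sq_abs ⟪E y, ν y⟫]
  have hptB : ∀ y, ⟪B y, ν y⟫ ^ 2 ≤ ‖B y‖ ^ 2 := by
    intro y
    have h1 : |⟪B y, ν y⟫| ≤ ‖B y‖ * ‖ν y‖ := abs_real_inner_le_norm _ _
    rw [hν y, mul_one] at h1
    nlinarith [abs_nonneg ⟪B y, ν y⟫, sq_abs ⟪B y, ν y⟫]
  have CSE : (∫ y, ⟪E y, ν y⟫) ^ 2 ≤ M * ∫ y, ‖E y‖ ^ 2 := by
    refine le_trans (sq_int_le _ hintE (hsq E hintE hintE2)) ?_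
    exact mul_le_mul_of_nonneg_left (integral_mono (hsq E hintE hintE2) hintE2 hptE) hM0
  have CSB : (∫ y, ⟪B y, ν y⟫) ^ 2 ≤ M * ∫ y, ‖B y‖ ^ 2 := by
    refine le_trans (sq_int_le _ hintB (hsq B hintB hintB2)) ?_
    exact mul_le_mul_of_nonneg_left (integral_mono (hsq B hintB hintB2) hintB2 hptB) hM0
  -- energy condition gives lower bound for the RHS integral
  have hpt : ∀ y, (1 / (8 * π)) * (‖E y‖ ^ 2 + ‖B y‖ ^ 2) ≤ μ y - |JEM y| := by
    intro y; have := hCDE y; linarith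
  have intEnergy : (1 / (8 * π)) * ((∫ y, ‖E y‖ ^ 2) + ∫ y, ‖B y‖ ^ 2)
      ≤ ∫ y, (μ y - |JEM y|) := by
    have h := integral_mono ((hintE2.add hintB2).const_mul (1 / (8 * π))) hintμ hpt
    simp only [Pi.add_apply] at h
    rwa [integral_const_mul, integral_add hintE2 hintB2] at h
  have hSE : 0 ≤ ∫ y, ‖E y‖ ^ 2 := integral_nonneg fun y => sq_nonneg _
  have hSB : 0 ≤ ∫ y, ‖B y‖ ^ 2 := integral_nonneg fun y => sq_nonneg _
  set IE := ∫ y, ⟪E y, ν y⟫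
  set IB := ∫ y, ⟪B y, ν y⟫
  set SE := ∫ y, ‖E y‖ ^ 2
  set SB := ∫ y, ‖B y‖ ^ 2
  calc ((1 / (4 * π)) * IE) ^ 2 + ((1 / (4 * π)) * IB) ^ 2
      = (IE ^ 2 + IB ^ 2) / (16 * π ^ 2) := by
        have hπ' : π ≠ 0 := hπ.ne'
        rw [eq_div_iff (by positivity : (16:ℝ) * π ^ 2 ≠ 0)]
        field_simp
        ring
    _ ≤ (M * SE + M * SB) / (16 * π ^ 2) :=
        div_le_div_of_nonneg_right (add_le_add CSE CSB) (by positivity)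
    _ = (M / (2 * π)) * ((1 / (8 * π)) * (SE + SB)) := by
        rw [div_eq_mul_inv, div_eq_mul_inv, div_eq_mul_inv]
        have hπ' : π ≠ 0 := hπ.ne'
        field_simp
        ring
    _ ≤ (M / (2 * π)) * ∫ y, (μ y - |JEM y|) := by
        exact mul_le_mul_of_nonneg_left intEnergy (by positivity)


end
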